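/- arXiv:1807.03889 — 3 statements merged into one kernel-verified Lean document; each statement's English description precedes it below -/
import Mathlib

section
/- For every real t, ∫_{−∞}^{∞} e^{itx} · (1/(π cosh x)) dx = sech(πt/2), i.e., the hyperbolic secant density 1/(π cosh x) has characteristic function 1/cosh(πt/2). -/
open MeasureTheory Set Real

noncomputable def lgt (u : ℝ) : ℝ := Real.log (u / (1 - u)) / 2

lemma lgt_image : lgt '' Ioo 0 1 = univ := by
  apply eq_univ_of_forall
  intro y
  refine ⟨Real.exp (2*y) / (1 + Real.exp (2*y)), ?_, ?_⟩
  · constructor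
    · positivity
    · rw [div_lt_one (by positivity)]
      linarith [Real.exp_pos (2*y)]
  · have h1 : (0:ℝ) < 1 + Real.exp (2*y) := by positivity
    have h2 : 1 - Real.exp (2*y) / (1 + Real.exp (2*y)) = 1 / (1 + Real.exp (2*y)) := by
      field_simp
      ring
    unfold lgt
    rw [h2]
    have h3 : rexp (2 * y) / (1 + rexp (2 * y)) / (1 / (1 + rexp (2 * y))) = rexp (2*y) := by
      field_simp
    rw [h3, Real.log_exp]
    ring

lemma lgt_inj : InjOn lgt (Ioo 0 1) := by
  intro u hu v hv h
  have hu1 : 0 < u / (1-u) := div_pos hu.1 (by linarith [hu.2])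
  have hv1 : 0 < v / (1-v) := div_pos hv.1 (by linarith [hv.2])
  unfold lgt at h
  have : u / (1-u) = v / (1-v) := by
    have := Real.exp_log hu1 ▸ Real.exp_log hv1 ▸ congrArg Real.exp (by linarith : Real.log (u/(1-u)) = Real.log (v/(1-v)))
    simpa using this
  have h1u : (1:ℝ) - u ≠ 0 := by nlinarith [hu.2]
  have h1v : (1:ℝ) - v ≠ 0 := by nlinarith [hv.2]
  field_simp at this
  nlinarith

lemma lgt_deriv {u : ℝ} (hu : u ∈ Ioo (0:ℝ) 1) :
    HasDerivAt lgt (1 / (2*u*(1-u))) u := by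
  have h0 : u ≠ 0 := ne_of_gt hu.1
  have h1 : (1:ℝ) - u ≠ 0 := by have := hu.2; intro h; linarith [h]
  have hd : HasDerivAt (fun u : ℝ => u / (1-u)) ((1 * (1-u) - u * (0-1)) / (1-u)^2) u := by
    exact (hasDerivAt_id' u).div ((hasDerivAt_const u (1:ℝ)).sub (hasDerivAt_id' u)) h1
  have hne : u / (1-u) ≠ 0 := div_ne_zero h0 h1
  have := (hd.log hne).div_const 2
  convert this using 1
  · rfl
  · rfl
  · rfl
  field_simp
  ring


lemma exp_half_log {r : ℝ} (hr : 0 < r) : Real.exp (Real.log r / 2) = Real.sqrt r := by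
  rw [Real.sqrt_eq_rpow, Real.rpow_def_of_pos hr]
  ring_nf

lemma cosh_lgt {u : ℝ} (hu : u ∈ Ioo (0:ℝ) 1) :
    Real.cosh (lgt u) = 1 / (2 * Real.sqrt (u * (1-u))) := by
  have h0 : 0 < u := hu.1
  have h1 : 0 < 1 - u := by linarith [hu.2]
  have hr : 0 < u / (1-u) := div_pos h0 h1
  have ha : 0 < Real.sqrt u := Real.sqrt_pos.2 h0
  have hb : 0 < Real.sqrt (1-u) := Real.sqrt_pos.2 h1
  have hexp : Real.exp (lgt u) = Real.sqrt u / Real.sqrt (1-u) := by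
    rw [lgt, exp_half_log hr, Real.sqrt_div (le_of_lt h0) (1-u)]
  rw [Real.cosh_eq, Real.exp_neg, hexp, Real.sqrt_mul (le_of_lt h0)]
  have h2 : Real.sqrt u ^ 2 = u := Real.sq_sqrt (le_of_lt h0)
  have h3 : Real.sqrt (1-u) ^ 2 = 1 - u := Real.sq_sqrt (le_of_lt h1)
  field_simp
  nlinarith [h2, h3]

lemma hreal_lem {u : ℝ} (hu : u ∈ Ioo (0:ℝ) 1) :
    |1 / (2*u*(1-u))| * (1 / (Real.pi * Real.cosh (lgt u)))
      = 1/Real.pi * Real.exp (-(Real.log u + Real.log (1-u))/2) := by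
  have h0 : 0 < u := hu.1
  have h1 : 0 < 1 - u := by linarith [hu.2]
  have hsq : 0 < Real.sqrt (u*(1-u)) := Real.sqrt_pos.2 (by positivity)
  have hc : Real.sqrt (u*(1-u)) ^ 2 = u * (1-u) := Real.sq_sqrt (by positivity)
  have hs : Real.exp (-(Real.log u + Real.log (1-u))/2) = 1 / Real.sqrt (u*(1-u)) := by
    have h2 : -(Real.log u + Real.log (1-u))/2 = -(Real.log (u*(1-u))/2) := by
      rw [Real.log_mul (ne_of_gt h0) (ne_of_gt h1)]; ring
    rw [h2, Real.exp_neg, exp_half_log (by positivity), one_div]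
  rw [hs, cosh_lgt hu, abs_of_pos (by positivity)]
  have hpi : Real.pi ≠ 0 := Real.pi_ne_zero
  have hu2 : Real.sqrt u ^ 2 = u := Real.sq_sqrt h0.le
  have hb2 : Real.sqrt (1-u) ^ 2 = 1 - u := Real.sq_sqrt h1.le
  have hab : (Real.sqrt u * Real.sqrt (1-u))^2 = u*(1-u) := by rw [mul_pow, hu2, hb2]
  field_simp
  linear_combination hc

lemma pointwise (t : ℝ) {u : ℝ} (hu : u ∈ Ioo (0:ℝ) 1) :
    |1 / (2*u*(1-u))| • (Complex.exp (Complex.I * t * lgt u) * ((1 / (Real.pi * Real.cosh (lgt u)) : ℝ) : ℂ))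
      = (1/(Real.pi:ℂ)) * ((u:ℂ) ^ ((1 + t*Complex.I)/2 - 1) * ((1:ℂ) - u) ^ ((1 - t*Complex.I)/2 - 1)) := by
  have h0 : 0 < u := hu.1
  have h1 : 0 < 1 - u := by linarith [hu.2]
  have hcu : (u:ℂ) ≠ 0 := by exact_mod_cast ne_of_gt h0
  have e1u : (1:ℂ) - u = ((1-u : ℝ) : ℂ) := by push_cast; ring
  have hc1 : ((1-u:ℝ):ℂ) ≠ 0 := by exact_mod_cast ne_of_gt h1
  rw [Complex.cpow_def_of_ne_zero hcu, e1u, Complex.cpow_def_of_ne_zero hc1,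
    ← Complex.ofReal_log h0.le, ← Complex.ofReal_log h1.le, ← Complex.exp_add]
  have hA : ((lgt u : ℝ) : ℂ) = ((Real.log u : ℂ) - (Real.log (1-u) : ℂ))/2 := by
    rw [lgt, Real.log_div (ne_of_gt h0) (ne_of_gt h1)]; push_cast; ring
  have hexpsum : (Real.log u : ℂ) * ((1 + t*Complex.I)/2 - 1)
      + (Real.log (1-u) : ℂ) * ((1 - t*Complex.I)/2 - 1)
      = Complex.I * t * (lgt u : ℝ) + ((-(Real.log u + Real.log (1-u))/2 : ℝ) : ℂ) := by
    rw [hA]; push_cast; ring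
  rw [hexpsum, Complex.exp_add, ← Complex.ofReal_exp]
  have key := hreal_lem hu
  calc |1 / (2*u*(1-u))| • (Complex.exp (Complex.I * t * lgt u) * ((1 / (Real.pi * Real.cosh (lgt u)) : ℝ) : ℂ))
      = ((|1 / (2*u*(1-u))| * (1 / (Real.pi * Real.cosh (lgt u))) : ℝ) : ℂ)
        * Complex.exp (Complex.I * t * lgt u) := by push_cast [Complex.real_smul]; ring
    _ = ((1/Real.pi * Real.exp (-(Real.log u + Real.log (1-u))/2) : ℝ) : ℂ)
        * Complex.exp (Complex.I * t * lgt u) := by rw [key]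
    _ = _ := by push_cast; ring

lemma hGamma (t : ℝ) : Complex.betaIntegral ((1+t*Complex.I)/2) ((1-t*Complex.I)/2)
    = (Real.pi : ℂ) / ((Real.cosh (Real.pi*t/2) : ℝ) : ℂ) := by
  have hre1 : 0 < ((1+(t:ℂ)*Complex.I)/2).re := by
    simp [Complex.div_re, Complex.add_re, Complex.mul_re]
  have hre2 : 0 < ((1-(t:ℂ)*Complex.I)/2).re := by
    simp [Complex.div_re, Complex.sub_re, Complex.mul_re]
  have key := Complex.Gamma_mul_Gamma_eq_betaIntegral hre1 hre2
  have hsum : (1+(t:ℂ)*Complex.I)/2 + (1-(t:ℂ)*Complex.I)/2 = 1 := by ring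
  rw [hsum, Complex.Gamma_one, one_mul] at key
  rw [← key]
  have h2 : (1 : ℂ) - (1+(t:ℂ)*Complex.I)/2 = (1-(t:ℂ)*Complex.I)/2 := by ring
  rw [← h2, Complex.Gamma_mul_Gamma_one_sub]
  congr 1
  have h3 : (Real.pi:ℂ) * ((1+(t:ℂ)*Complex.I)/2)
      = ((Real.pi*t/2 : ℝ) : ℂ) * Complex.I + (Real.pi:ℂ)/2 := by push_cast; ring
  rw [h3, Complex.sin_add_pi_div_two, Complex.cos_mul_I, Complex.ofReal_cosh]

/-- The hyperbolic secant density `1/(π cosh x)` has characteristic function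
`1/cosh(πt/2)`. -/
theorem stmt5 (t : ℝ) :
    ∫ x : ℝ, Complex.exp (Complex.I * t * x) * ((1 / (Real.pi * Real.cosh x) : ℝ) : ℂ)
      = ((1 / Real.cosh (Real.pi * t / 2) : ℝ) : ℂ) := by
  rw [← MeasureTheory.setIntegral_univ, ← lgt_image,
    MeasureTheory.integral_image_eq_integral_abs_deriv_smul measurableSet_Ioo
      (fun x hx => (lgt_deriv hx).hasDerivWithinAt) lgt_inj,
    MeasureTheory.setIntegral_congr_fun measurableSet_Ioo (fun u hu => pointwise t hu),
    MeasureTheory.integral_const_mul]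
  have hbeta : Complex.betaIntegral ((1+(t:ℂ)*Complex.I)/2) ((1-(t:ℂ)*Complex.I)/2)
      = ∫ u in Ioo (0:ℝ) 1,
        (u:ℂ)^((1+(t:ℂ)*Complex.I)/2-1) * ((1:ℂ)-u)^((1-(t:ℂ)*Complex.I)/2-1) := by
    rw [Complex.betaIntegral, intervalIntegral.integral_of_le zero_le_one,
      MeasureTheory.integral_Ioc_eq_integral_Ioo]
  rw [← hbeta, hGamma]
  have hc : Real.cosh (Real.pi*t/2) ≠ 0 := (Real.cosh_pos _).ne'
  have hp : (Real.pi : ℂ) ≠ 0 := by exact_mod_cast Real.pi_ne_zero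
  push_cast
  field_simp
end

section
/- For every t ≥ 1, (1/t) ∫_{−t}^{t} exp(cos y) · cos(sin y) dy ≥ 2 e^{−1} cos(1) > 0. Consequently, (1/t) ∫_{−t}^{t} F̂_{μ₀+1}(y)/F̂_{μ₀}(y) dy does not converge to 0 as t → ∞ for Poisson characteristic functions F̂_μ(y) = exp(μ(e^{iy} − 1)), so the Poisson family is not of Riemann–Lebesgue type. -/
open Filter

lemma stmt14_ptwise (y : ℝ) :
    Real.exp (-1) * Real.cos 1 ≤ Real.exp (Real.cos y) * Real.cos (Real.sin y) := by
  have h1 : Real.cos 1 ≤ Real.cos (Real.sin y) := by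
    rw [← Real.cos_abs (Real.sin y)]
    apply Real.cos_le_cos_of_nonneg_of_le_pi (abs_nonneg _)
    · linarith [Real.pi_gt_three]
    · exact abs_le.2 ⟨Real.neg_one_le_sin y, Real.sin_le_one y⟩
  have h2 : Real.exp (-1) ≤ Real.exp (Real.cos y) :=
    Real.exp_le_exp.2 (Real.neg_one_le_cos y)
  have h3 : 0 ≤ Real.cos 1 :=
    le_of_lt (Real.cos_pos_of_mem_Ioo ⟨by linarith [Real.pi_gt_three], by
      linarith [Real.pi_gt_three]⟩)
  exact mul_le_mul h2 h1 h3 (Real.exp_nonneg _)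

lemma stmt14_main (t : ℝ) (ht : 1 ≤ t) :
    2 * Real.exp (-1) * Real.cos 1
      ≤ (1 / t) * ∫ y in (-t)..t, Real.exp (Real.cos y) * Real.cos (Real.sin y) := by
  have ht0 : 0 < t := by linarith
  have hab : (-t) ≤ t := by linarith
  have hint : IntervalIntegrable (fun y => Real.exp (Real.cos y) * Real.cos (Real.sin y))
      MeasureTheory.volume (-t) t :=
    (Continuous.mul (Real.continuous_exp.comp Real.continuous_cos)
      (Real.continuous_cos.comp Real.continuous_sin)).intervalIntegrable _ _
  have hmono : ∫ y in (-t)..t, Real.exp (-1) * Real.cos 1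
      ≤ ∫ y in (-t)..t, Real.exp (Real.cos y) * Real.cos (Real.sin y) :=
    intervalIntegral.integral_mono_on hab (intervalIntegrable_const) hint
      (fun y _ => stmt14_ptwise y)
  rw [intervalIntegral.integral_const] at hmono
  have h2 : 2 * t * (Real.exp (-1) * Real.cos 1)
      ≤ ∫ y in (-t)..t, Real.exp (Real.cos y) * Real.cos (Real.sin y) := by
    calc 2 * t * (Real.exp (-1) * Real.cos 1)
        = (t - -t) • (Real.exp (-1) * Real.cos 1) := by ring_nf
      _ ≤ _ := hmono
  have := mul_le_mul_of_nonneg_left h2 (le_of_lt (one_div_pos.2 ht0))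
  calc 2 * Real.exp (-1) * Real.cos 1
      = (1 / t) * (2 * t * (Real.exp (-1) * Real.cos 1)) := by field_simp
    _ ≤ _ := this

/-- For `t ≥ 1`, `(1/t) ∫_{−t}^{t} exp(cos y) cos(sin y) dy ≥ 2 e^{−1} cos 1 > 0`;
consequently `(1/t) ∫_{−t}^{t} F̂_{μ₀+1}(y)/F̂_{μ₀}(y) dy` does not tend to 0 as
`t → ∞` for Poisson characteristic functions `F̂_μ(y) = exp(μ(e^{iy} − 1))`. -/
theorem stmt14 :
    (∀ t : ℝ, 1 ≤ t →
        2 * Real.exp (-1) * Real.cos 1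
          ≤ (1 / t) * ∫ y in (-t)..t, Real.exp (Real.cos y) * Real.cos (Real.sin y))
    ∧ 0 < 2 * Real.exp (-1) * Real.cos 1
    ∧ (∀ μ₀ : ℝ, 0 < μ₀ →
        ¬ Tendsto
          (fun t : ℝ => (1 / (t : ℂ)) *
            ∫ y in (-t)..t,
              Complex.exp ((μ₀ + 1) * (Complex.exp (Complex.I * y) - 1)) /
                Complex.exp (μ₀ * (Complex.exp (Complex.I * y) - 1)))
          atTop (nhds 0)) := by
  have hcos1 : 0 < Real.cos 1 :=
    Real.cos_pos_of_mem_Ioo ⟨by linarith [Real.pi_gt_three], by linarith [Real.pi_gt_three]⟩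
  have hpos : 0 < 2 * Real.exp (-1) * Real.cos 1 := by positivity
  refine ⟨stmt14_main, hpos, ?_⟩
  intro μ₀ _ H
  -- the real part tends to 0
  have Hre : Tendsto (fun t : ℝ => ((1 / (t : ℂ)) *
      ∫ y in (-t)..t,
        Complex.exp ((μ₀ + 1) * (Complex.exp (Complex.I * y) - 1)) /
          Complex.exp (μ₀ * (Complex.exp (Complex.I * y) - 1))).re) atTop (nhds 0) := by
    have h := (Complex.continuous_re.tendsto 0).comp H
    exact h
  -- but the real part is eventually ≥ a positive constant
  set d : ℝ := Real.exp (-1) * (2 * Real.exp (-1) * Real.cos 1) with hd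
  have hdpos : 0 < d := by positivity
  have hev : ∀ᶠ t : ℝ in atTop, d ≤ ((1 / (t : ℂ)) *
      ∫ y in (-t)..t,
        Complex.exp ((μ₀ + 1) * (Complex.exp (Complex.I * y) - 1)) /
          Complex.exp (μ₀ * (Complex.exp (Complex.I * y) - 1))).re := by
    filter_upwards [eventually_ge_atTop (1 : ℝ)] with t ht
    have ht0 : 0 < t := by linarith
    have hfun : ∀ y : ℝ,
        Complex.exp ((μ₀ + 1) * (Complex.exp (Complex.I * y) - 1)) /
          Complex.exp (μ₀ * (Complex.exp (Complex.I * y) - 1))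
        = Complex.exp (Complex.exp (Complex.I * y) - 1) := by
      intro y
      rw [← Complex.exp_sub]
      congr 1
      ring
    simp only [hfun]
    have hint : IntervalIntegrable (fun y : ℝ => Complex.exp (Complex.exp (Complex.I * y) - 1))
        MeasureTheory.volume (-t) t := by
      apply Continuous.intervalIntegrable
      exact Complex.continuous_exp.comp ((Complex.continuous_exp.comp
        (continuous_const.mul Complex.continuous_ofReal)).sub continuous_const)
    have hre : (∫ y in (-t)..t, Complex.exp (Complex.exp (Complex.I * y) - 1)).re
        = ∫ y in (-t)..t, (Complex.exp (Complex.exp (Complex.I * y) - 1)).re := by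
      have := Complex.reCLM.intervalIntegral_comp_comm hint
      simpa using this.symm
    have hre2 : ∀ y : ℝ, (Complex.exp (Complex.exp (Complex.I * y) - 1)).re
        = Real.exp (-1) * (Real.exp (Real.cos y) * Real.cos (Real.sin y)) := by
      intro y
      rw [Complex.exp_re]
      simp [Complex.sub_re, Complex.sub_im, Complex.exp_re, Complex.exp_im,
        Complex.mul_re, Complex.mul_im, Complex.I_re, Complex.I_im,
        Complex.ofReal_re, Complex.ofReal_im]
      rw [show Real.cos y - 1 = -1 + Real.cos y from by ring, Real.exp_add]
      ring
    have hmulre : ((1 / (t : ℂ)) *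
        ∫ y in (-t)..t, Complex.exp (Complex.exp (Complex.I * y) - 1)).re
        = (1 / t) * ∫ y in (-t)..t,
            Real.exp (-1) * (Real.exp (Real.cos y) * Real.cos (Real.sin y)) := by
      have h1 : (1 / (t : ℂ)) = ((1 / t : ℝ) : ℂ) := by push_cast; ring
      rw [h1, Complex.re_ofReal_mul, hre]
      congr 1
      exact intervalIntegral.integral_congr fun y _ => hre2 y
    rw [hmulre, intervalIntegral.integral_const_mul, hd]
    rw [show (1 / t) * (Real.exp (-1) * ∫ y in (-t)..t,
        Real.exp (Real.cos y) * Real.cos (Real.sin y))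
      = Real.exp (-1) * ((1 / t) * ∫ y in (-t)..t,
        Real.exp (Real.cos y) * Real.cos (Real.sin y)) from by ring]
    exact mul_le_mul_of_nonneg_left (stmt14_main t ht) (Real.exp_nonneg _)
  have hlt : ∀ᶠ t : ℝ in atTop, ((1 / (t : ℂ)) *
      ∫ y in (-t)..t,
        Complex.exp ((μ₀ + 1) * (Complex.exp (Complex.I * y) - 1)) /
          Complex.exp (μ₀ * (Complex.exp (Complex.I * y) - 1))).re < d :=
    Hre.eventually (eventually_lt_nhds hdpos)
  obtain ⟨t, h1, h2⟩ := (hev.and hlt).exists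
  linarith
end

section
/- For every real z ≥ 0 and every real r > 1, Σ_{n=0}^∞ z^{n/2} / √(n!) ≤ √(r/(r−1)) · exp(z r / 2). -/
/-- For every `z ≥ 0` and `r > 1`,
`Σ_n z^{n/2}/√(n!) ≤ √(r/(r−1)) exp(z r / 2)`. -/
theorem stmt17 (z r : ℝ) (hz : 0 ≤ z) (hr : 1 < r) :
    ∑' n : ℕ, z ^ ((n : ℝ) / 2) / Real.sqrt (Nat.factorial n : ℝ)
      ≤ Real.sqrt (r / (r - 1)) * Real.exp (z * r / 2) := by
  have hr0 : (0:ℝ) < r := lt_trans one_pos hr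
  have hr1 : (0:ℝ) < r - 1 := by linarith
  have hinv0 : (0:ℝ) ≤ 1 / r := by positivity
  have hinv1 : 1 / r < 1 := by
    rw [div_lt_one hr0]; exact hr
  set a : ℕ → ℝ := fun n => Real.sqrt ((z * r) ^ n / (Nat.factorial n : ℝ))
  set b : ℕ → ℝ := fun n => Real.sqrt ((1 / r) ^ n)
  have hterm : ∀ n : ℕ, z ^ ((n : ℝ) / 2) / Real.sqrt (Nat.factorial n : ℝ)
      = a n * b n := by
    intro n
    have hfac : (0:ℝ) < (Nat.factorial n : ℝ) := by positivity
    have h1 : z ^ ((n : ℝ) / 2) = Real.sqrt (z ^ n) := by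
      rw [show ((n : ℝ) / 2) = (n : ℝ) * (1/2) by ring, Real.rpow_mul hz,
        Real.rpow_natCast, Real.sqrt_eq_rpow]
    have h2 : a n * b n = Real.sqrt ((z * r) ^ n / (Nat.factorial n : ℝ) * (1 / r) ^ n) := by
      rw [← Real.sqrt_mul (by positivity)]
    have h3 : (z * r) ^ n / (Nat.factorial n : ℝ) * (1 / r) ^ n
        = z ^ n / (Nat.factorial n : ℝ) := by
      field_simp
      rw [mul_pow]
      rw [mul_assoc, ← mul_pow, mul_one_div_cancel hr0.ne', one_pow, mul_one]
    rw [h1, h2, h3]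
    exact (Real.sqrt_div (by positivity) _).symm
  have hag : ∀ n, 0 ≤ a n := fun n => Real.sqrt_nonneg _
  have hbg : ∀ n, 0 ≤ b n := fun n => Real.sqrt_nonneg _
  apply Real.tsum_le_of_sum_range_le
  · intro n
    have : (0:ℝ) ≤ z ^ ((n:ℝ)/2) := Real.rpow_nonneg hz _
    positivity
  intro N
  have habN : ∀ n ∈ Finset.range N, z ^ ((n : ℝ) / 2) / Real.sqrt (Nat.factorial n : ℝ)
      = a n * b n := fun n _ => hterm n
  rw [Finset.sum_congr rfl habN]
  have hCS := Finset.sum_mul_sq_le_sq_mul_sq (Finset.range N) a b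
  have hA : ∑ n ∈ Finset.range N, (a n) ^ 2 ≤ Real.exp (z * r) := by
    have : ∀ n ∈ Finset.range N, (a n) ^ 2 = (z * r) ^ n / (Nat.factorial n : ℝ) := by
      intro n _
      exact Real.sq_sqrt (by positivity)
    rw [Finset.sum_congr rfl this]
    exact Real.sum_le_exp_of_nonneg (by positivity) N
  have hB : ∑ n ∈ Finset.range N, (b n) ^ 2 ≤ r / (r - 1) := by
    have h1 : ∀ n ∈ Finset.range N, (b n) ^ 2 = (1 / r) ^ n := by
      intro n _
      exact Real.sq_sqrt (by positivity)
    rw [Finset.sum_congr rfl h1]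
    have hsum : Summable (fun n : ℕ => (1 / r) ^ n) :=
      summable_geometric_of_lt_one hinv0 hinv1
    have := Summable.sum_le_tsum (Finset.range N) (fun n _ => by positivity) hsum
    rw [tsum_geometric_of_lt_one hinv0 hinv1] at this
    refine this.trans (le_of_eq ?_)
    field_simp
  have hsum_nonneg : 0 ≤ ∑ n ∈ Finset.range N, a n * b n :=
    Finset.sum_nonneg fun n _ => mul_nonneg (hag n) (hbg n)
  have hbound : (∑ n ∈ Finset.range N, a n * b n) ^ 2
      ≤ Real.exp (z * r) * (r / (r - 1)) := by
    calc (∑ n ∈ Finset.range N, a n * b n) ^ 2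
        ≤ (∑ n ∈ Finset.range N, (a n) ^ 2) * ∑ n ∈ Finset.range N, (b n) ^ 2 := hCS
      _ ≤ Real.exp (z * r) * (r / (r - 1)) := by
          apply mul_le_mul hA hB (Finset.sum_nonneg fun n _ => sq_nonneg _)
            (Real.exp_pos _).le
  have hrhs : Real.sqrt (r / (r - 1)) * Real.exp (z * r / 2)
      = Real.sqrt (Real.exp (z * r) * (r / (r - 1))) := by
    rw [Real.sqrt_mul (Real.exp_pos _).le, ← Real.exp_half]
    ring
  rw [hrhs]
  exact (Real.le_sqrt hsum_nonneg (by positivity)).mpr hbound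
end
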